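/- arXiv:2501.13565 — 6 statements merged into one kernel-verified Lean document; each statement's English description precedes it below -/
import Mathlib

section
/- Let g, p : ℝ → ℝ be continuously differentiable and 1-periodic (g(x+1) = g(x) and p(x+1) = p(x) for all x), with p(x) > 0 for all x. Then ∫₀¹ (g·p)′(x)·log(p(x)) dx = ∫₀¹ g′(x)·p(x) dx. -/
/-- Integration-by-parts identity (4.12): for `g, p ∈ C¹(𝕋)` with `p > 0`,
`∫₀¹ (gp)'(x) log(p(x)) dx = ∫₀¹ g'(x) p(x) dx`. -/
theorem periodic_ibp_log
    (g p : ℝ → ℝ)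
    (hg : ContDiff ℝ 1 g) (hp : ContDiff ℝ 1 p)
    (hgper : ∀ x, g (x + 1) = g x) (hpper : ∀ x, p (x + 1) = p x)
    (hppos : ∀ x, 0 < p x) :
    ∫ x in (0:ℝ)..1, deriv (fun y => g y * p y) x * Real.log (p x)
      = ∫ x in (0:ℝ)..1, deriv g x * p x := by
  have hgd : Differentiable ℝ g := hg.differentiable one_ne_zero
  have hpd : Differentiable ℝ p := hp.differentiable one_ne_zero
  have hgc : Continuous (deriv g) := (contDiff_one_iff_deriv.mp hg).2
  have hpc : Continuous (deriv p) := (contDiff_one_iff_deriv.mp hp).2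
  have hu : ∀ x : ℝ, HasDerivAt (fun y => g y * p y)
      (deriv g x * p x + g x * deriv p x) x :=
    fun x => ((hgd x).hasDerivAt).mul ((hpd x).hasDerivAt)
  have hv : ∀ x : ℝ, HasDerivAt (fun y => Real.log (p y)) (deriv p x / p x) x :=
    fun x => ((hpd x).hasDerivAt).log (hppos x).ne'
  have hderiv : ∀ x, deriv (fun y => g y * p y) x = deriv g x * p x + g x * deriv p x :=
    fun x => (hu x).deriv
  have hcu' : Continuous (fun x => deriv g x * p x + g x * deriv p x) :=
    (hgc.mul hpd.continuous).add (hgd.continuous.mul hpc)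
  have hcv' : Continuous (fun x => deriv p x / p x) :=
    hpc.div hpd.continuous (fun x => (hppos x).ne')
  have hper : p 1 = p 0 := by simpa using hpper 0
  have hgper1 : g 1 = g 0 := by simpa using hgper 0
  have h1 := intervalIntegral.integral_deriv_mul_eq_sub
      (u := fun y => g y * p y) (v := fun y => Real.log (p y))
      (u' := fun x => deriv g x * p x + g x * deriv p x)
      (v' := fun x => deriv p x / p x)
      (fun x _ => hu x) (fun x _ => hv x)
      (hcu'.intervalIntegrable 0 1) (hcv'.intervalIntegrable 0 1)
  have h2 := intervalIntegral.integral_deriv_mul_eq_sub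
      (u := g) (v := p)
      (u' := fun x => deriv g x) (v' := fun x => deriv p x)
      (fun x _ => (hgd x).hasDerivAt) (fun x _ => (hpd x).hasDerivAt)
      (hgc.intervalIntegrable 0 1) (hpc.intervalIntegrable 0 1)
  simp only [hgper1, hper, sub_self] at h1 h2
  -- simplify u x * v' x = g x * deriv p x
  have huv' : ∀ x, g x * p x * (deriv p x / p x) = g x * deriv p x := by
    intro x
    rw [mul_assoc, mul_div_cancel₀ _ (hppos x).ne']
  -- integrability pieces
  have hA : IntervalIntegrable
      (fun x => (deriv g x * p x + g x * deriv p x) * Real.log (p x)) MeasureTheory.volume 0 1 :=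
    (hcu'.mul (hpd.continuous.log (fun x => (hppos x).ne'))).intervalIntegrable 0 1
  have hB : IntervalIntegrable (fun x => g x * deriv p x) MeasureTheory.volume 0 1 :=
    (hgd.continuous.mul hpc).intervalIntegrable 0 1
  have hC : IntervalIntegrable (fun x => deriv g x * p x) MeasureTheory.volume 0 1 :=
    (hgc.mul hpd.continuous).intervalIntegrable 0 1
  have h1' : (∫ x in (0:ℝ)..1, (deriv g x * p x + g x * deriv p x) * Real.log (p x))
      + ∫ x in (0:ℝ)..1, g x * deriv p x = 0 := by
    rw [← intervalIntegral.integral_add hA hB]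
    rw [← h1]
    congr 1
    ext x
    rw [huv' x]
  have h2' : (∫ x in (0:ℝ)..1, deriv g x * p x) + ∫ x in (0:ℝ)..1, g x * deriv p x = 0 := by
    rw [← intervalIntegral.integral_add hC hB]; exact h2
  have : (∫ x in (0:ℝ)..1, deriv (fun y => g y * p y) x * Real.log (p x))
      = ∫ x in (0:ℝ)..1, (deriv g x * p x + g x * deriv p x) * Real.log (p x) := by
    congr 1
    ext x
    rw [hderiv x]
  rw [this]
  linarith [h1', h2']
end

section
/- Let b, p : ℝ → ℝ be twice continuously differentiable and 1-periodic (b(x+1) = b(x) and p(x+1) = p(x) for all x), with p(x) > 0 for all x. Then (1/2)·∫₀¹ (b²·p)″(x)·log(p(x)) dx = (1/2)·∫₀¹ [ b′(x)²·p(x) − ((b·p)′(x))² / p(x) ] dx. -/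
open intervalIntegral MeasureTheory Set

/-- Identity (4.13) in the proof of the Lyapunov exponent formula: for `b, p ∈ C²(𝕋)`
with `p > 0`,
`(1/2) ∫₀¹ (b²p)''(x) log(p(x)) dx = (1/2) ∫₀¹ [ b'(x)² p(x) − ((bp)'(x))²/p(x) ] dx`. -/
theorem periodic_second_ibp_log
    (b p : ℝ → ℝ)
    (hb : ContDiff ℝ 2 b) (hp : ContDiff ℝ 2 p)
    (hbper : ∀ x, b (x + 1) = b x) (hpper : ∀ x, p (x + 1) = p x)
    (hppos : ∀ x, 0 < p x) :
    (1/2) * ∫ x in (0:ℝ)..1, deriv (deriv (fun y => (b y) ^ 2 * p y)) x * Real.log (p x)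
      = (1/2) * ∫ x in (0:ℝ)..1,
          ((deriv b x) ^ 2 * p x - (deriv (fun y => b y * p y) x) ^ 2 / p x) := by
  set F : ℝ → ℝ := fun y => (b y) ^ 2 * p y with hFdef
  have hdb : Differentiable ℝ b := hb.differentiable (by norm_num)
  have hdp : Differentiable ℝ p := hp.differentiable (by norm_num)
  have hF2 : ContDiff ℝ 2 F := (hb.pow 2).mul hp
  have hF1 : ContDiff ℝ 1 (deriv F) := by
    have h := contDiff_succ_iff_deriv.mp (show ContDiff ℝ (1 + 1) F by norm_num [hF2])
    exact h.2.2
  have hdF : Differentiable ℝ (deriv F) := hF1.differentiable (by norm_num)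
  have hcF2 : Continuous (deriv (deriv F)) := (contDiff_one_iff_deriv.mp hF1).2
  have hcp' : Continuous (deriv p) := by
    have h := contDiff_succ_iff_deriv.mp (show ContDiff ℝ (1 + 1) p by norm_num [hp])
    exact (h.2.2.differentiable (by norm_num)).continuous
  have hpne : ∀ x, p x ≠ 0 := fun x => (hppos x).ne'
  -- derivative of F
  have hFd : ∀ x, deriv F x = 2 * b x * deriv b x * p x + (b x) ^ 2 * deriv p x := by
    intro x
    have h1 : HasDerivAt (fun y => (b y) ^ 2) (2 * b x * deriv b x) x := by
      have := ((hdb x).hasDerivAt.fun_pow 2)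
      simpa [mul_comm, mul_assoc, mul_left_comm] using this
    have h2 : HasDerivAt F (2 * b x * deriv b x * p x + (b x) ^ 2 * deriv p x) x :=
      h1.mul (hdp x).hasDerivAt
    exact h2.deriv
  have hbpd : ∀ x, deriv (fun y => b y * p y) x = deriv b x * p x + b x * deriv p x :=
    fun x => ((hdb x).hasDerivAt.mul (hdp x).hasDerivAt).deriv
  -- periodicity of deriv F
  have hFper : ∀ x, F (x + 1) = F x := fun x => by simp [hFdef, hbper x, hpper x]
  have hdFper : deriv F 1 = deriv F 0 := by
    have hF : F = fun y => F (y + 1) := funext fun y => (hFper y).symm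
    symm
    calc deriv F 0 = deriv (fun y => F (y + 1)) 0 := by rw [← hF]
      _ = deriv F (0 + 1) := deriv_comp_add_const F 1 0
      _ = deriv F 1 := by norm_num
  have hp10 : p 1 = p 0 := by simpa using hpper 0
  -- integration by parts
  have hlog : ∀ x ∈ Set.uIcc (0:ℝ) 1, HasDerivAt (fun y => Real.log (p y))
      (deriv p x / p x) x := fun x _ => ((hdp x).hasDerivAt.log (hpne x))
  have hdF' : ∀ x ∈ Set.uIcc (0:ℝ) 1, HasDerivAt (deriv F) (deriv (deriv F) x) x :=
    fun x _ => (hdF x).hasDerivAt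
  have hint1 : IntervalIntegrable (fun x => deriv p x / p x) volume 0 1 :=
    (hcp'.div (hdp.continuous) hpne).intervalIntegrable 0 1
  have hint2 : IntervalIntegrable (fun x => deriv (deriv F) x) volume 0 1 :=
    hcF2.intervalIntegrable 0 1
  have ibp := intervalIntegral.integral_mul_deriv_eq_deriv_mul hlog hdF' hint1 hint2
  have key : ∫ x in (0:ℝ)..1, deriv (deriv F) x * Real.log (p x)
      = - ∫ x in (0:ℝ)..1, deriv p x / p x * deriv F x := by
    have h1 : ∫ x in (0:ℝ)..1, Real.log (p x) * deriv (deriv F) x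
        = ∫ x in (0:ℝ)..1, deriv (deriv F) x * Real.log (p x) := by
      simp [mul_comm]
    rw [← h1, ibp, hdFper, hp10]; ring
  rw [key]
  congr 1
  rw [← intervalIntegral.integral_neg]
  apply intervalIntegral.integral_congr
  intro x _
  have hFdx := hFd x
  have hbpdx := hbpd x
  have hx := hpne x
  simp only [hFdx, hbpdx]
  field_simp
  ring
end

section
/- Let p : ℝ → ℝ be twice continuously differentiable, 1-periodic, with p(x) > 0 for all x; let a : ℝ → ℝ be continuously differentiable and 1-periodic; let c̃ ∈ ℝ; let I be a finite index set and for each i ∈ I let b_i : ℝ → ℝ be twice continuously differentiable and 1-periodic. Assume the stationary Fokker–Planck equation holds pointwise on ℝ: (1/2)·(Σ_{i∈I} b_i²·p)″(x) = ((c̃ + a)·p)′(x) for all x ∈ ℝ. Then ∫₀¹ a′(x)·p(x) dx − (1/2)·Σ_{i∈I} ∫₀¹ b_i′(x)²·p(x) dx = −(1/2)·Σ_{i∈I} ∫₀¹ ((b_i·p)′(x))² / p(x) dx. -/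
/-- The second identity of the Lyapunov exponent formula (4.10) in deterministic form:
if the stationary Fokker–Planck equation `(1/2)(Σᵢ bᵢ² p)'' = ((c̃ + a) p)'` holds
pointwise, then
`∫₀¹ a' p − (1/2) Σᵢ ∫₀¹ (bᵢ')² p = −(1/2) Σᵢ ∫₀¹ ((bᵢ p)')² / p`. -/
theorem lyapunov_exponent_identity
    {I : Type*} [Fintype I]
    (p a : ℝ → ℝ) (ctilde : ℝ) (b : I → ℝ → ℝ)
    (hp : ContDiff ℝ 2 p) (hpper : ∀ x, p (x + 1) = p x) (hppos : ∀ x, 0 < p x)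
    (ha : ContDiff ℝ 1 a) (haper : ∀ x, a (x + 1) = a x)
    (hb : ∀ i, ContDiff ℝ 2 (b i)) (hbper : ∀ i, ∀ x, b i (x + 1) = b i x)
    (hFP : ∀ x : ℝ,
      (1/2) * deriv (deriv (fun y => (∑ i, (b i y) ^ 2) * p y)) x
        = deriv (fun y => (ctilde + a y) * p y) x) :
    (∫ x in (0:ℝ)..1, deriv a x * p x)
      - (1/2) * ∑ i, ∫ x in (0:ℝ)..1, (deriv (b i) x) ^ 2 * p x
      = -(1/2) * ∑ i, ∫ x in (0:ℝ)..1, (deriv (fun y => b i y * p y) x) ^ 2 / p x := by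
  -- basic regularity facts
  have hpd : Differentiable ℝ p := hp.differentiable two_ne_zero
  have hpc : Continuous p := hp.continuous
  have hp'c : Continuous (deriv p) := hp.continuous_deriv one_le_two
  have hpne : ∀ x, p x ≠ 0 := fun x => (hppos x).ne'
  have had : Differentiable ℝ a := ha.differentiable one_ne_zero
  have hac : Continuous a := ha.continuous
  have ha'c : Continuous (deriv a) := ha.continuous_deriv le_rfl
  have hbd : ∀ i, Differentiable ℝ (b i) := fun i => (hb i).differentiable two_ne_zero
  have hbc : ∀ i, Continuous (b i) := fun i => (hb i).continuous
  have hb'c : ∀ i, Continuous (deriv (b i)) := fun i => (hb i).continuous_deriv one_le_two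
  -- the diffusion coefficient and the flux
  set q : ℝ → ℝ := fun y => (∑ i, (b i y) ^ 2) * p y with hq_def
  have hBcd : ContDiff ℝ 2 (fun y => ∑ i, (b i y) ^ 2) :=
    ContDiff.sum fun i _ => (hb i).pow 2
  have hBd : Differentiable ℝ (fun y => ∑ i, (b i y) ^ 2) := hBcd.differentiable two_ne_zero
  have hq : ContDiff ℝ 2 q := hBcd.mul hp
  have hqd : Differentiable ℝ q := hq.differentiable two_ne_zero
  set f : ℝ → ℝ := deriv q with hf_def
  have hf1 : ContDiff ℝ 1 f := ((contDiff_succ_iff_deriv (n := 1)).mp (by exact_mod_cast hq)).2.2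
  have hfd : Differentiable ℝ f := hf1.differentiable one_ne_zero
  have hfc : Continuous f := hf1.continuous
  -- derivative of each squared coefficient
  have hderiv_sq : ∀ i x, deriv (fun y => (b i y) ^ 2) x = 2 * b i x * deriv (b i) x := by
    intro i x
    have h := (((hbd i) x).hasDerivAt.fun_pow 2).deriv
    simpa using h
  have hderivB : ∀ x, deriv (fun y => ∑ i, (b i y) ^ 2) x = ∑ i, 2 * b i x * deriv (b i) x := by
    intro x
    rw [deriv_fun_sum fun i _ => ((hbd i x).fun_pow 2)]
    exact Finset.sum_congr rfl fun i _ => hderiv_sq i x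
  -- formula for f
  have hf_eq : ∀ x, f x = (∑ i, 2 * b i x * deriv (b i) x) * p x
      + (∑ i, (b i x) ^ 2) * deriv p x := by
    intro x
    rw [hf_def, hq_def, deriv_fun_mul (hBd x) (hpd x), hderivB]
  -- the flux is constant
  set ap : ℝ → ℝ := fun y => (ctilde + a y) * p y with hap_def
  have hapd : Differentiable ℝ ap := ((differentiable_const _).add had).mul hpd
  have hconst : ∀ x y : ℝ, (1/2) * f x - ap x = (1/2) * f y - ap y := by
    have hdiff : Differentiable ℝ (fun x => (1/2) * f x - ap x) :=
      (hfd.const_mul _).sub hapd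
    have hzero : ∀ x, deriv (fun x => (1/2) * f x - ap x) x = 0 := by
      intro x
      rw [deriv_fun_sub ((hfd x).const_mul _) (hapd x), deriv_const_mul _ (hfd x)]
      have := hFP x
      rw [hf_def]
      rw [hap_def]
      linarith
    intro x y
    exact is_const_of_deriv_eq_zero hdiff hzero x y
  set J : ℝ := (1/2) * f 0 - ap 0 with hJ_def
  have hflux : ∀ x, a x * p x = (1/2) * f x - ctilde * p x - J := by
    intro x
    have h := hconst x 0
    rw [← hJ_def] at h
    have : ap x = (ctilde + a x) * p x := rfl
    rw [this] at h
    ring_nf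
    ring_nf at h
    linarith
  -- periodicity at the endpoints
  have hp10 : p 1 = p 0 := by simpa using hpper 0
  have ha10 : a 1 = a 0 := by simpa using haper 0
  -- interval integrability of everything in sight
  have hInt : ∀ g : ℝ → ℝ, Continuous g → IntervalIntegrable g MeasureTheory.volume 0 1 :=
    fun g hg => hg.intervalIntegrable 0 1
  have hcont_div : Continuous (fun x => deriv p x / p x) := hp'c.div hpc hpne
  -- ∫ p' = 0
  have I0 : (∫ x in (0:ℝ)..1, deriv p x) = 0 := by
    rw [intervalIntegral.integral_deriv_eq_sub (fun x _ => hpd x) (hInt _ hp'c), hp10, sub_self]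
  -- ∫ p'/p = 0
  have Ilog : (∫ x in (0:ℝ)..1, deriv p x / p x) = 0 := by
    have hlogd : ∀ x : ℝ, deriv (fun y => Real.log (p y)) x = deriv p x / p x := by
      intro x
      exact deriv.log (hpd x) (hpne x)
    have : (∫ x in (0:ℝ)..1, deriv (fun y => Real.log (p y)) x)
        = Real.log (p 1) - Real.log (p 0) := by
      apply intervalIntegral.integral_deriv_eq_sub (fun x _ => (hpd x).log (hpne x))
      have : (deriv fun y => Real.log (p y)) = fun x => deriv p x / p x := funext hlogd
      rw [this]
      exact hInt _ hcont_div
    rw [hp10, sub_self] at this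
    calc (∫ x in (0:ℝ)..1, deriv p x / p x)
        = ∫ x in (0:ℝ)..1, deriv (fun y => Real.log (p y)) x :=
          intervalIntegral.integral_congr fun x _ => (hlogd x).symm
      _ = 0 := this
  -- integration by parts : ∫ a' p = - ∫ a p'
  have Iparts : (∫ x in (0:ℝ)..1, deriv a x * p x)
      = - ∫ x in (0:ℝ)..1, a x * deriv p x := by
    have h1 : (∫ x in (0:ℝ)..1, deriv (fun y => a y * p y) x)
        = a 1 * p 1 - a 0 * p 0 :=
      intervalIntegral.integral_deriv_eq_sub (fun x _ => (had x).mul (hpd x)) (by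
        have : (deriv fun y => a y * p y)
            = fun x => deriv a x * p x + a x * deriv p x :=
          funext fun x => deriv_mul (had x) (hpd x)
        rw [this]
        exact hInt _ ((ha'c.mul hpc).add (hac.mul hp'c)))
    rw [ha10, hp10, sub_self] at h1
    have h2 : (∫ x in (0:ℝ)..1, deriv (fun y => a y * p y) x)
        = (∫ x in (0:ℝ)..1, deriv a x * p x) + ∫ x in (0:ℝ)..1, a x * deriv p x := by
      rw [← intervalIntegral.integral_add (f := fun x => deriv a x * p x) (g := fun x => a x * deriv p x) (hInt _ (ha'c.mul hpc)) (hInt _ (hac.mul hp'c))]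
      exact intervalIntegral.integral_congr fun x _ => deriv_mul (had x) (hpd x)
    linarith
  -- ∫ f p'/p = 2 ∫ a p'
  have Ifp : (∫ x in (0:ℝ)..1, f x * deriv p x / p x)
      = 2 * ∫ x in (0:ℝ)..1, a x * deriv p x := by
    have hpt : ∀ x, a x * deriv p x
        = (1/2) * (f x * deriv p x / p x) - ctilde * deriv p x - J * (deriv p x / p x) := by
      intro x
      have hne := hpne x
      have h1 : a x * deriv p x = (a x * p x) * (deriv p x / p x) := by
        field_simp
      rw [h1, hflux x]
      field_simp
    have : (∫ x in (0:ℝ)..1, a x * deriv p x)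
        = (∫ x in (0:ℝ)..1, ((1/2) * (f x * deriv p x / p x)
            - ctilde * deriv p x - J * (deriv p x / p x))) :=
      intervalIntegral.integral_congr fun x _ => hpt x
    have intF : IntervalIntegrable (fun x => f x * deriv p x / p x)
        MeasureTheory.volume 0 1 := hInt _ ((hfc.mul hp'c).div hpc hpne)
    have e1 : (∫ x in (0:ℝ)..1, ((1/2) * (f x * deriv p x / p x)
          - ctilde * deriv p x - J * (deriv p x / p x)))
        = (∫ x in (0:ℝ)..1, ((1/2) * (f x * deriv p x / p x) - ctilde * deriv p x))
          - ∫ x in (0:ℝ)..1, J * (deriv p x / p x) :=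
      intervalIntegral.integral_sub
        (f := fun x => (1/2) * (f x * deriv p x / p x) - ctilde * deriv p x)
        (g := fun x => J * (deriv p x / p x))
        ((intF.const_mul _).sub ((hInt _ hp'c).const_mul ctilde))
        ((hInt _ hcont_div).const_mul J)
    have e2 : (∫ x in (0:ℝ)..1, ((1/2) * (f x * deriv p x / p x) - ctilde * deriv p x))
        = (∫ x in (0:ℝ)..1, (1/2) * (f x * deriv p x / p x))
          - ∫ x in (0:ℝ)..1, ctilde * deriv p x :=
      intervalIntegral.integral_sub
        (f := fun x => (1/2) * (f x * deriv p x / p x))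
        (g := fun x => ctilde * deriv p x)
        (intF.const_mul _) ((hInt _ hp'c).const_mul ctilde)
    have e3 : (∫ x in (0:ℝ)..1, (1/2) * (f x * deriv p x / p x))
        = (1/2) * ∫ x in (0:ℝ)..1, f x * deriv p x / p x :=
      intervalIntegral.integral_const_mul _ _
    have e4 : (∫ x in (0:ℝ)..1, ctilde * deriv p x)
        = ctilde * ∫ x in (0:ℝ)..1, deriv p x :=
      intervalIntegral.integral_const_mul _ _
    have e5 : (∫ x in (0:ℝ)..1, J * (deriv p x / p x))
        = J * ∫ x in (0:ℝ)..1, deriv p x / p x :=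
      intervalIntegral.integral_const_mul _ _
    rw [e1, e2, e3, e4, e5, I0, Ilog] at this
    simp only [mul_zero, sub_zero] at this
    linarith
  -- the big sum identity
  have hcont_bp' : ∀ i, Continuous (deriv (fun y => b i y * p y)) :=
    fun i => ((hb i).mul hp).continuous_deriv one_le_two
  have E2 : (∑ i, ∫ x in (0:ℝ)..1, (deriv (fun y => b i y * p y) x) ^ 2 / p x)
      = (∑ i, ∫ x in (0:ℝ)..1, (deriv (b i) x) ^ 2 * p x)
        + ∫ x in (0:ℝ)..1, f x * deriv p x / p x := by
    have S1 : (∑ i, ∫ x in (0:ℝ)..1, (deriv (fun y => b i y * p y) x) ^ 2 / p x)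
        = ∫ x in (0:ℝ)..1, ∑ i, (deriv (fun y => b i y * p y) x) ^ 2 / p x :=
      (intervalIntegral.integral_finset_sum
        (f := fun i x => (deriv (fun y => b i y * p y) x) ^ 2 / p x)
        (fun i _ => hInt _ (((hcont_bp' i).pow 2).div hpc hpne))).symm
    have S2 : (∑ i, ∫ x in (0:ℝ)..1, (deriv (b i) x) ^ 2 * p x)
        = ∫ x in (0:ℝ)..1, ∑ i, (deriv (b i) x) ^ 2 * p x :=
      (intervalIntegral.integral_finset_sum
        (f := fun i x => (deriv (b i) x) ^ 2 * p x)
        (fun i _ => hInt _ (((hb'c i).pow 2).mul hpc))).symm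
    have S3 : (∫ x in (0:ℝ)..1,
          ((∑ i, (deriv (b i) x) ^ 2 * p x) + f x * deriv p x / p x))
        = (∫ x in (0:ℝ)..1, ∑ i, (deriv (b i) x) ^ 2 * p x)
          + ∫ x in (0:ℝ)..1, f x * deriv p x / p x :=
      intervalIntegral.integral_add
        (f := fun x => ∑ i, (deriv (b i) x) ^ 2 * p x)
        (g := fun x => f x * deriv p x / p x)
        (hInt _ (by exact continuous_finset_sum _ fun i _ => ((hb'c i).pow 2).mul hpc))
        (hInt _ ((hfc.mul hp'c).div hpc hpne))
    rw [S1, S2, ← S3]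
    apply intervalIntegral.integral_congr
    intro x _
    have hbp : ∀ i, deriv (fun y => b i y * p y) x
        = deriv (b i) x * p x + b i x * deriv p x :=
      fun i => deriv_mul (hbd i x) (hpd x)
    have hne := hpne x
    have hterm : ∀ i, (deriv (fun y => b i y * p y) x) ^ 2 / p x
        = (deriv (b i) x) ^ 2 * p x + (2 * b i x * deriv (b i) x) * deriv p x
          + (b i x) ^ 2 * ((deriv p x) ^ 2 / p x) := by
      intro i
      rw [hbp i]
      field_simp
      ring
    calc (∑ i, (deriv (fun y => b i y * p y) x) ^ 2 / p x)
        = ∑ i, ((deriv (b i) x) ^ 2 * p x + (2 * b i x * deriv (b i) x) * deriv p x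
            + (b i x) ^ 2 * ((deriv p x) ^ 2 / p x)) :=
          Finset.sum_congr rfl fun i _ => hterm i
      _ = (∑ i, (deriv (b i) x) ^ 2 * p x)
            + ((∑ i, 2 * b i x * deriv (b i) x) * deriv p x
              + (∑ i, (b i x) ^ 2) * ((deriv p x) ^ 2 / p x)) := by
          rw [Finset.sum_add_distrib, Finset.sum_add_distrib, Finset.sum_mul, Finset.sum_mul]
          ring
      _ = (∑ i, (deriv (b i) x) ^ 2 * p x) + f x * deriv p x / p x := by
          rw [hf_eq x]
          field_simp
          ring
  -- conclusion
  rw [E2, Ifp, Iparts]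
  ring
end

section
/- Let p : ℝ → ℝ be twice continuously differentiable, 1-periodic, with p(x) > 0 for all x and ∫₀¹ p(x) dx = 1; let a : ℝ → ℝ be continuously differentiable and 1-periodic; let c̃ ∈ ℝ; let I be a finite index set and for each i ∈ I let b_i : ℝ → ℝ be twice continuously differentiable and 1-periodic. Assume the stationary Fokker–Planck equation (1/2)·(Σ_{i∈I} b_i²·p)″(x) = ((c̃ + a)·p)′(x) holds for all x ∈ ℝ, and assume there exist i₁, i₂ ∈ I such that b_{i₁} and b_{i₂} are linearly independent as functions from ℝ to ℝ. Then ∫₀¹ ( a′(x) − (1/2)·Σ_{i∈I} b_i′(x)² )·p(x) dx < 0. -/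
open MeasureTheory intervalIntegral Set


/-- derivative of a 1-periodic function is 1-periodic -/
lemma deriv_periodic_aux (f : ℝ → ℝ) (hf : ∀ x, f (x + 1) = f x) (x : ℝ) :
    deriv f (x + 1) = deriv f x := by
  have e : deriv (fun y => f (y + 1)) x = deriv f (x + 1) := deriv_comp_add_const f 1 x
  rw [← e, show (fun y => f (y + 1)) = f from funext hf]

/-- If a nonnegative continuous quantity `φ² / p` has zero integral over one period,
then the function `ψ` with derivative `φ` is constant. -/
lemma const_of_integral_zero_aux (p φ ψ : ℝ → ℝ) (hpc : Continuous p)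
    (hppos : ∀ x, 0 < p x) (hφc : Continuous φ)
    (hψ : ∀ x, HasDerivAt ψ (φ x) x) (hψper : ∀ x, ψ (x + 1) = ψ x)
    (hint : ∫ x in (0:ℝ)..1, (φ x) ^ 2 / p x = 0) : ∀ x, ψ x = ψ 0 := by
  set h : ℝ → ℝ := fun x => (φ x) ^ 2 / p x with hh
  have hhc : Continuous h := (hφc.pow 2).div hpc fun x => (hppos x).ne'
  have hhint : IntervalIntegrable h volume 0 1 := hhc.intervalIntegrable 0 1
  have hae : h =ᵐ[volume.restrict (Set.Ioc 0 1)] 0 :=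
    (intervalIntegral.integral_eq_zero_iff_of_le_of_nonneg_ae (by norm_num)
      (Filter.Eventually.of_forall fun x => div_nonneg (sq_nonneg _) (hppos x).le) hhint).mp hint
  have hnull : volume ({x | h x ≠ 0} ∩ Set.Ioc 0 1) = 0 := by
    have h1 := MeasureTheory.ae_iff.mp hae
    rwa [MeasureTheory.Measure.restrict_apply] at h1
    exact (isOpen_compl_singleton.preimage hhc : IsOpen {x | h x ≠ 0}).measurableSet
  have hU : Set.Ioo (0:ℝ) 1 ∩ {x | h x ≠ 0} = ∅ := by
    have hopen : IsOpen (Set.Ioo (0:ℝ) 1 ∩ {x | h x ≠ 0}) :=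
      isOpen_Ioo.inter (isOpen_compl_singleton.preimage hhc)
    have hsub : Set.Ioo (0:ℝ) 1 ∩ {x | h x ≠ 0} ⊆ {x | h x ≠ 0} ∩ Set.Ioc 0 1 :=
      fun x hx => ⟨hx.2, Set.Ioo_subset_Ioc_self hx.1⟩
    exact hopen.eq_empty_of_measure_zero (measure_mono_null hsub hnull)
  have hIoo : ∀ x ∈ Set.Ioo (0:ℝ) 1, φ x = 0 := by
    intro x hx
    by_contra hne
    have hmem : x ∈ Set.Ioo (0:ℝ) 1 ∩ {x | h x ≠ 0} :=
      ⟨hx, div_ne_zero (pow_ne_zero 2 hne) (hppos x).ne'⟩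
    rw [hU] at hmem
    exact hmem
  have hIcc : ∀ x ∈ Set.Icc (0:ℝ) 1, φ x = 0 := by
    have hcl : Set.EqOn φ 0 (closure (Set.Ioo (0:ℝ) 1)) :=
      Set.EqOn.closure (fun x hx => hIoo x hx) hφc continuous_const
    rw [closure_Ioo (by norm_num : (0:ℝ) ≠ 1)] at hcl
    exact fun x hx => hcl hx
  have hφper : Function.Periodic φ 1 := by
    intro x
    have e1 : deriv ψ = φ := funext fun y => (hψ y).deriv
    rw [← e1]
    exact deriv_periodic_aux ψ hψper x
  have hφ0 : ∀ x, φ x = 0 := by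
    intro x
    have e := hφper.sub_int_mul_eq (x := x) ⌊x⌋
    rw [← e]
    apply hIcc
    rw [mul_one]
    exact ⟨by linarith [Int.floor_le x], by linarith [Int.lt_floor_add_one x]⟩
  intro x
  exact is_const_of_deriv_eq_zero (fun y => (hψ y).differentiableAt)
    (fun y => by rw [(hψ y).deriv]; exact hφ0 y) x 0

lemma algebra_aux (P P1 P2 da aa c K X Y Z W : ℝ) (hP : P ≠ 0)
    (h2 : (1/2) * ((W * P + Y * P1) + (Y * P1 + Z * P2)) = da * P + (c + aa) * P1)
    (h3 : (1/2) * (Y * P + Z * P1) - (c + aa) * P = K) :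
    (da - (1/2) * X) * P + (1/2) * ((X * P^2 + Y * (P * P1) + Z * P1^2) / P)
      = (1/2) * ((W * P + Y * P1) + (Y * P1 + Z * P2)) + K * (P1 / P) := by
  rw [← h3, h2]
  field_simp
  ring

/-- Deterministic core of Corollary 4.2 (negativity of the Lyapunov exponent):
if the stationary Fokker–Planck equation `(1/2)(Σᵢ bᵢ² p)'' = ((c̃ + a) p)'` holds with
a positive `C²` 1-periodic density `p` of unit mass, and two of the `bᵢ` are linearly
independent, then `∫₀¹ (a' − (1/2) Σᵢ (bᵢ')²) p < 0`. -/
theorem lyapunov_exponent_negative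
    {I : Type*} [Fintype I]
    (p a : ℝ → ℝ) (ctilde : ℝ) (b : I → ℝ → ℝ)
    (hp : ContDiff ℝ 2 p) (hpper : ∀ x, p (x + 1) = p x) (hppos : ∀ x, 0 < p x)
    (hpmass : ∫ x in (0:ℝ)..1, p x = 1)
    (ha : ContDiff ℝ 1 a) (haper : ∀ x, a (x + 1) = a x)
    (hb : ∀ i, ContDiff ℝ 2 (b i)) (hbper : ∀ i, ∀ x, b i (x + 1) = b i x)
    (hFP : ∀ x : ℝ,
      (1/2) * deriv (deriv (fun y => (∑ i, (b i y) ^ 2) * p y)) x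
        = deriv (fun y => (ctilde + a y) * p y) x)
    (hli : ∃ i₁ i₂ : I, LinearIndependent ℝ ![b i₁, b i₂]) :
    (∫ x in (0:ℝ)..1, (deriv a x - (1/2) * ∑ i, (deriv (b i) x) ^ 2) * p x) < 0 := by
  classical
  obtain ⟨i₁, i₂, hind⟩ := hli
  -- basic regularity facts
  have hpd : Differentiable ℝ p := hp.differentiable two_ne_zero
  have hp' : ContDiff ℝ 1 (deriv p) := by
    have hp2 : ContDiff ℝ (1+1) p := by norm_num; exact hp
    exact (contDiff_succ_iff_deriv.mp hp2).2.2
  have hpd' : Differentiable ℝ (deriv p) := hp'.differentiable one_ne_zero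
  have hpc : Continuous p := hpd.continuous
  have hp'c : Continuous (deriv p) := hpd'.continuous
  have hbd : ∀ i, Differentiable ℝ (b i) := fun i => (hb i).differentiable two_ne_zero
  have hb' : ∀ i, ContDiff ℝ 1 (deriv (b i)) := by
    intro i
    have h2 : ContDiff ℝ (1+1) (b i) := by norm_num; exact hb i
    exact (contDiff_succ_iff_deriv.mp h2).2.2
  have hbd' : ∀ i, Differentiable ℝ (deriv (b i)) := fun i => (hb' i).differentiable one_ne_zero
  have hbc : ∀ i, Continuous (b i) := fun i => (hbd i).continuous
  have hb'c : ∀ i, Continuous (deriv (b i)) := fun i => (hbd' i).continuous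
  have had : Differentiable ℝ a := ha.differentiable one_ne_zero
  have ha'c : Continuous (deriv a) := ha.continuous_deriv le_rfl
  have hpne : ∀ x, p x ≠ 0 := fun x => (hppos x).ne'
  -- first and second derivatives of q = (∑ bᵢ²) p
  set Q1 : ℝ → ℝ := fun x =>
    (∑ i, 2 * b i x * deriv (b i) x) * p x + (∑ i, (b i x) ^ 2) * deriv p x with hQ1def
  have hS : ∀ x, HasDerivAt (fun y => ∑ i, (b i y) ^ 2)
      (∑ i, 2 * b i x * deriv (b i) x) x := by
    intro x
    apply HasDerivAt.fun_sum
    intro i _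
    have h1 := ((hbd i) x).hasDerivAt
    have h2 := h1.pow 2
    norm_num at h2
    exact h2
  have hQ1 : ∀ x, HasDerivAt (fun y => (∑ i, (b i y) ^ 2) * p y) (Q1 x) x :=
    fun x => (hS x).mul ((hpd x).hasDerivAt)
  have hq1 : deriv (fun y => (∑ i, (b i y) ^ 2) * p y) = Q1 :=
    funext fun x => (hQ1 x).deriv
  set Q2 : ℝ → ℝ := fun x =>
    ((∑ i, (2 * deriv (b i) x * deriv (b i) x + 2 * b i x * deriv (deriv (b i)) x)) * p x
      + (∑ i, 2 * b i x * deriv (b i) x) * deriv p x)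
    + ((∑ i, 2 * b i x * deriv (b i) x) * deriv p x
      + (∑ i, (b i x) ^ 2) * deriv (deriv p) x) with hQ2def
  have hQ2 : ∀ x, HasDerivAt Q1 (Q2 x) x := by
    intro x
    apply HasDerivAt.add
    · apply HasDerivAt.mul _ ((hpd x).hasDerivAt)
      apply HasDerivAt.fun_sum
      intro i _
      have h1 : HasDerivAt (fun y => 2 * b i y) (2 * deriv (b i) x) x :=
        ((hbd i x).hasDerivAt).const_mul 2
      exact h1.mul ((hbd' i x).hasDerivAt)
    · exact (hS x).mul ((hpd' x).hasDerivAt)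
  have hq2 : ∀ x, deriv (deriv (fun y => (∑ i, (b i y) ^ 2) * p y)) x = Q2 x := by
    intro x; rw [hq1]; exact (hQ2 x).deriv
  -- derivative of (ctilde + a) p
  have hA : ∀ x, HasDerivAt (fun y => (ctilde + a y) * p y)
      (deriv a x * p x + (ctilde + a x) * deriv p x) x := by
    intro x
    exact (((had x).hasDerivAt).const_add ctilde).mul ((hpd x).hasDerivAt)
  -- pointwise Fokker–Planck in explicit form
  have hFP' : ∀ x, (1/2) * Q2 x = deriv a x * p x + (ctilde + a x) * deriv p x := by
    intro x
    rw [← hq2 x, ← (hA x).deriv]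
    exact hFP x
  -- integrate once: (1/2) Q1 - (ctilde + a) p is constant
  set K : ℝ := (1/2) * Q1 0 - (ctilde + a 0) * p 0 with hKdef
  have hK : ∀ x, (1/2) * Q1 x - (ctilde + a x) * p x = K := by
    have hconst := is_const_of_deriv_eq_zero
      (f := fun x => (1/2) * Q1 x - (ctilde + a x) * p x) ?_ ?_
    · intro x; exact hconst x 0
    · intro x
      exact (((hQ2 x).const_mul (1/2)).sub (hA x)).differentiableAt
    · intro x
      rw [(((hQ2 x).const_mul (1/2)).fun_sub (hA x)).deriv]
      rw [hFP' x]; ring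
  -- the integrand pair
  set T : ℝ → ℝ := fun x => (deriv a x - (1/2) * ∑ i, (deriv (b i) x) ^ 2) * p x with hTdef
  set S : ℝ → ℝ :=
    fun x => (1/2) * ∑ i, (deriv (b i) x * p x + b i x * deriv p x) ^ 2 / p x with hSdef
  set G : ℝ → ℝ := fun x => (1/2) * Q1 x + K * Real.log (p x) with hGdef
  have hG : ∀ x, HasDerivAt G (T x + S x) x := by
    intro x
    have h1 : HasDerivAt G ((1/2) * Q2 x + K * (deriv p x / p x)) x :=
      ((hQ2 x).const_mul (1/2)).add ((((hpd x).hasDerivAt).log (hpne x)).const_mul K)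
    convert h1 using 1
    -- now pure algebra
    have hexp : ∑ i, (deriv (b i) x * p x + b i x * deriv p x) ^ 2
        = (∑ i, (deriv (b i) x) ^ 2) * (p x) ^ 2
          + (∑ i, 2 * b i x * deriv (b i) x) * (p x * deriv p x)
          + (∑ i, (b i x) ^ 2) * (deriv p x) ^ 2 := by
      rw [Finset.sum_mul, Finset.sum_mul, Finset.sum_mul,
        ← Finset.sum_add_distrib, ← Finset.sum_add_distrib]
      exact Finset.sum_congr rfl fun i _ => by ring
    have h2 := hFP' x
    have h3 := hK x
    simp only [hQ1def, hQ2def] at h2 h3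
    simp only [hTdef, hSdef, hQ1def, hQ2def]
    rw [← Finset.sum_div, hexp]
    exact algebra_aux (p x) (deriv p x) (deriv (deriv p) x) (deriv a x) (a x) ctilde K
      _ _ _ _ (hpne x) h2 h3
  -- continuity of the integrands
  have hTc : Continuous T := by
    apply Continuous.mul _ hpc
    apply Continuous.sub ha'c
    exact continuous_const.mul (continuous_finset_sum _ fun i _ => (hb'c i).pow 2)
  have hφc : ∀ i, Continuous (fun x => deriv (b i) x * p x + b i x * deriv p x) :=
    fun i => ((hb'c i).mul hpc).add ((hbc i).mul hp'c)
  have hSc : Continuous S := by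
    apply Continuous.mul continuous_const
    apply continuous_finset_sum
    intro i _
    exact ((hφc i).pow 2).div hpc hpne
  -- FTC over one period
  have hint : ∫ x in (0:ℝ)..1, (T x + S x) = G 1 - G 0 :=
    intervalIntegral.integral_eq_sub_of_hasDerivAt (fun x _ => hG x)
      ((hTc.add hSc).intervalIntegrable 0 1)
  -- periodicity kills the boundary term
  have hG10 : G 1 = G 0 := by
    have hb1 : ∀ i (x : ℝ), deriv (b i) (x + 1) = deriv (b i) x :=
      fun i => deriv_periodic_aux (b i) (hbper i)
    have hp1 : ∀ x : ℝ, deriv p (x + 1) = deriv p x := deriv_periodic_aux p hpper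
    have hQ1per : Q1 1 = Q1 0 := by
      simp only [hQ1def]
      rw [show (1:ℝ) = 0 + 1 from (zero_add 1).symm]
      simp only [hbper, hb1, hp1, hpper]
    have hpper' : p 1 = p 0 := by simpa using hpper 0
    simp only [hGdef, hQ1per, hpper']
  have hTS0 : ∫ x in (0:ℝ)..1, (T x + S x) = 0 := by rw [hint, hG10, sub_self]
  have hTint : IntervalIntegrable T volume 0 1 := hTc.intervalIntegrable 0 1
  have hSint : IntervalIntegrable S volume 0 1 := hSc.intervalIntegrable 0 1
  have hsplit : (∫ x in (0:ℝ)..1, T x) = - ∫ x in (0:ℝ)..1, S x := by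
    have hadd := intervalIntegral.integral_add hTint hSint
    rw [hTS0] at hadd
    linarith
  -- the per-mode dissipation integrals
  set J : I → ℝ := fun i =>
    ∫ x in (0:ℝ)..1, (deriv (b i) x * p x + b i x * deriv p x) ^ 2 / p x with hJdef
  have hScomp : (∫ x in (0:ℝ)..1, S x) = (1/2) * ∑ i, J i := by
    simp only [hSdef]
    rw [intervalIntegral.integral_const_mul]
    congr 1
    rw [← intervalIntegral.integral_finset_sum]
    intro i _
    exact (((hφc i).pow 2).div hpc hpne).intervalIntegrable 0 1
  have hJnonneg : ∀ i, 0 ≤ J i := fun i =>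
    intervalIntegral.integral_nonneg (by norm_num)
      (fun x _ => div_nonneg (sq_nonneg _) (hppos x).le)
  -- zero dissipation for mode i forces bᵢ p to be constant
  have hkey : ∀ i, J i = 0 → ∀ x, b i x * p x = b i 0 * p 0 := by
    intro i hJi
    have hψ : ∀ x, HasDerivAt (fun y => b i y * p y)
        (deriv (b i) x * p x + b i x * deriv p x) x :=
      fun x => ((hbd i x).hasDerivAt).mul ((hpd x).hasDerivAt)
    exact const_of_integral_zero_aux p _ _ hpc hppos (hφc i) hψ
      (fun x => by simp only [hbper, hpper]) hJi
  -- strict positivity of the dissipation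
  have hpos : 0 < ∑ i, J i := by
    rcases lt_or_eq_of_le (Finset.sum_nonneg (fun i _ => hJnonneg i)) with h | h
    · exact h
    exfalso
    have hall : ∀ i, J i = 0 := by
      intro i
      have hle : J i ≤ ∑ j, J j := Finset.single_le_sum (fun j _ => hJnonneg j) (Finset.mem_univ i)
      have := hJnonneg i
      linarith [h.symm ▸ hle]
    have hc₁ := hkey i₁ (hall i₁)
    have hc₂ := hkey i₂ (hall i₂)
    set c₁ : ℝ := b i₁ 0 * p 0 with hc1def
    set c₂ : ℝ := b i₂ 0 * p 0 with hc2def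
    have hdep : c₂ • b i₁ + (-c₁) • b i₂ = 0 := by
      funext x
      have hx : (c₂ * b i₁ x + (-c₁) * b i₂ x) * p x = 0 := by
        have e : (c₂ * b i₁ x + (-c₁) * b i₂ x) * p x
            = c₂ * (b i₁ x * p x) - c₁ * (b i₂ x * p x) := by ring
        rw [e, hc₁ x, hc₂ x]; ring
      have h0 := (mul_eq_zero.mp hx).resolve_right (hpne x)
      simpa using h0
    obtain ⟨hs, ht⟩ := LinearIndependent.pair_iff.mp hind c₂ (-c₁) hdep
    have hc10 : c₁ = 0 := by simpa using ht
    have hb0 : b i₁ = 0 := by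
      funext x
      have hx := hc₁ x
      rw [hc10] at hx
      simpa using (mul_eq_zero.mp hx).resolve_right (hpne x)
    have hne := hind.ne_zero 0
    rw [Matrix.cons_val_zero, hb0] at hne
    exact hne rfl
  -- conclude
  have hSpos : 0 < ∫ x in (0:ℝ)..1, S x := by
    rw [hScomp]; linarith
  calc (∫ x in (0:ℝ)..1, (deriv a x - (1/2) * ∑ i, (deriv (b i) x) ^ 2) * p x)
      = ∫ x in (0:ℝ)..1, T x := by simp only [hTdef]
    _ = - ∫ x in (0:ℝ)..1, S x := hsplit
    _ < 0 := by linarith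
end

section
/- For every ε ∈ (0, 1/2), δ ∈ (0, 1/2) and M > 0 there exists L₀ > 0 with the following property: for every L ≥ L₀, every η ∈ ℝ, every continuous F : ℝ → ℝ with |F(x)| ≤ M for all x ∈ ℝ, and every differentiable γ : ℝ → ℝ satisfying γ′(t) = F(γ(t)) − L·sin(2π(γ(t) − η)) for all t ∈ [0,1] and η − 1/2 + δ ≤ γ(0) ≤ η + 1/2 − δ, one has |γ(1) − η| ≤ ε. -/
open Set

/-- Forward invariance: if the derivative is `≤ -1` whenever `g` lies in the band
`[a, a']`, then the sublevel set `{g ≤ a}` is forward invariant. -/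
lemma squeeze_invariance (g : ℝ → ℝ) (hg : Differentiable ℝ g) (a a' t₀ T : ℝ)
    (haa' : a < a')
    (hderiv : ∀ t ∈ Set.Icc t₀ T, g t ∈ Set.Icc a a' → deriv g t ≤ -1)
    (h0 : g t₀ ≤ a) : ∀ t ∈ Set.Icc t₀ T, g t ≤ a := by
  intro t ht
  by_contra hgt
  push_neg at hgt
  -- last time before t at which g ≤ a
  set S : Set ℝ := Set.Icc t₀ t ∩ {u | g u ≤ a} with hS
  have hScl : IsClosed S := isClosed_Icc.inter (isClosed_le hg.continuous continuous_const)
  have hSne : S.Nonempty := ⟨t₀, ⟨le_refl _, ht.1⟩, h0⟩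
  have hSbdd : BddAbove S := ⟨t, fun u hu => hu.1.2⟩
  set t₂ := sSup S with ht₂
  have ht₂S : t₂ ∈ S := hScl.csSup_mem hSne hSbdd
  have ht₂0 : t₀ ≤ t₂ := ht₂S.1.1
  have ht₂t : t₂ ≤ t := ht₂S.1.2
  have hgt₂ : g t₂ ≤ a := ht₂S.2
  have hgtabove : ∀ u, t₂ < u → u ≤ t → a < g u := by
    intro u hu1 hu2
    by_contra h
    push_neg at h
    have : u ∈ S := ⟨⟨ht₂0.trans hu1.le, hu2⟩, h⟩
    exact absurd (le_csSup hSbdd this) (not_le.mpr hu1)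
  -- first time after t₂ at which g reaches c
  set c := min (g t) a' with hc
  have hac : a < c := lt_min hgt haa'
  set S₂ : Set ℝ := Set.Icc t₂ t ∩ {u | c ≤ g u} with hS₂
  have hS₂cl : IsClosed S₂ := isClosed_Icc.inter (isClosed_le continuous_const hg.continuous)
  have hS₂ne : S₂.Nonempty := ⟨t, ⟨ht₂t, le_refl _⟩, show c ≤ g t from min_le_left _ _⟩
  have hS₂bdd : BddBelow S₂ := ⟨t₂, fun u hu => hu.1.1⟩
  set t₃ := sInf S₂ with ht₃
  have ht₃S : t₃ ∈ S₂ := hS₂cl.csInf_mem hS₂ne hS₂bdd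
  have ht₃2 : t₂ ≤ t₃ := ht₃S.1.1
  have ht₃t : t₃ ≤ t := ht₃S.1.2
  have hgt₃ : c ≤ g t₃ := ht₃S.2
  have h23 : t₂ < t₃ := by
    rcases lt_or_eq_of_le ht₃2 with h | h
    · exact h
    · exfalso; rw [← h] at hgt₃; linarith
  have hbelow : ∀ u, t₂ ≤ u → u < t₃ → g u < c := by
    intro u hu1 hu2
    by_contra h
    push_neg at h
    have : u ∈ S₂ := ⟨⟨hu1, hu2.le.trans ht₃t⟩, h⟩
    exact absurd (csInf_le hS₂bdd this) (not_le.mpr hu2)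
  have hanti : AntitoneOn g (Set.Icc t₂ t₃) := by
    apply antitoneOn_of_deriv_nonpos (convex_Icc _ _) hg.continuous.continuousOn
      hg.differentiableOn
    intro u hu
    rw [interior_Icc] at hu
    have h1 : a < g u := hgtabove u hu.1 (hu.2.le.trans ht₃t)
    have h2 : g u < c := hbelow u hu.1.le hu.2
    have := hderiv u ⟨ht₂0.trans hu.1.le, (hu.2.le.trans ht₃t).trans ht.2⟩
      ⟨h1.le, h2.le.trans (min_le_right _ _)⟩
    linarith
  have := hanti ⟨le_refl _, h23.le⟩ ⟨h23.le, le_refl _⟩ h23.le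
  linarith

/-- Descent plus invariance: if the derivative is `≤ -1` on the band `[ε, b']` and
`g 0 ≤ b` with `ε < b < b' ≤ 1/2`-ish, then `g 1 ≤ ε`. -/
lemma squeeze_upper (g : ℝ → ℝ) (hg : Differentiable ℝ g) (ε b b' : ℝ)
    (hε : 0 < ε) (hεb : ε < b) (hbb' : b < b') (hb : b ≤ 1/2)
    (hderiv : ∀ t ∈ Set.Icc (0:ℝ) 1, g t ∈ Set.Icc ε b' → deriv g t ≤ -1)
    (h0 : g 0 ≤ b) : g 1 ≤ ε := by
  have step1 : ∀ t ∈ Set.Icc (0:ℝ) 1, g t ≤ b := by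
    apply squeeze_invariance g hg b b' 0 1 hbb' _ h0
    intro t ht hm
    exact hderiv t ht ⟨hεb.le.trans hm.1, hm.2⟩
  have step2 : ∃ u ∈ Set.Icc (0:ℝ) 1, g u ≤ ε := by
    by_contra h
    push_neg at h
    have hanti : AntitoneOn (fun t => g t + t) (Set.Icc (0:ℝ) 1) := by
      apply antitoneOn_of_deriv_nonpos (convex_Icc _ _)
        (hg.continuous.add continuous_id).continuousOn
        (hg.add differentiable_id).differentiableOn
      intro u hu
      rw [interior_Icc] at hu
      have hu' : u ∈ Set.Icc (0:ℝ) 1 := ⟨hu.1.le, hu.2.le⟩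
      have hd : deriv (fun t => g t + t) u = deriv g u + 1 := by
        have := ((hg u).hasDerivAt.add (hasDerivAt_id u)).deriv
        exact (by simpa using this : deriv (g + id) u = deriv g u + 1)
      have hband := hderiv u hu' ⟨(h u hu').le, (step1 u hu').trans hbb'.le⟩
      show deriv (fun t => g t + t) u ≤ 0
      rw [hd]; linarith
    have h10 := hanti (Set.left_mem_Icc.mpr zero_le_one) (Set.right_mem_Icc.mpr zero_le_one)
      zero_le_one
    have h1 := h 1 (Set.right_mem_Icc.mpr zero_le_one)
    simp only at h10
    linarith
  obtain ⟨u, hu, hgu⟩ := step2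
  have := squeeze_invariance g hg ε b' u 1 (hεb.trans hbb')
    (fun t ht hm => hderiv t ⟨hu.1.trans ht.1, ht.2⟩ hm) hgu 1
    ⟨hu.2, le_refl _⟩
  exact this

/-- On `[m, π - m]` with `0 ≤ m ≤ π/2`, the sine is at least `sin m`. -/
lemma squeeze_sin_lower (m θ : ℝ) (hm0 : 0 ≤ m) (hm : m ≤ Real.pi / 2)
    (h1 : m ≤ θ) (h2 : m ≤ Real.pi - θ) : Real.sin m ≤ Real.sin θ := by
  rcases le_or_gt θ (Real.pi / 2) with h | h
  · exact Real.strictMonoOn_sin.monotoneOn ⟨by linarith, hm⟩ ⟨by linarith, h⟩ h1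
  · have : Real.sin θ = Real.sin (Real.pi - θ) := (Real.sin_pi_sub θ).symm
    rw [this]
    have hπ : 0 < Real.pi := Real.pi_pos
    exact Real.strictMonoOn_sin.monotoneOn ⟨by linarith, hm⟩
      ⟨by linarith, by linarith⟩ h2

/-- Analytic core of Lemma 4.5 (pointwise strong swift transitivity): for a strong
enough control field `−L sin(2π(· − η))`, any solution of the controlled phase ODE
with bounded residual drift starting at distance at least `δ` from the repelling point
`η + 1/2` is squeezed to within `ε` of the attracting point `η` by time 1. -/
theorem squeezing_control
    : ∀ ε ∈ Set.Ioo (0:ℝ) (1/2), ∀ δ ∈ Set.Ioo (0:ℝ) (1/2), ∀ M : ℝ, 0 < M →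
      ∃ L₀ : ℝ, 0 < L₀ ∧ ∀ L : ℝ, L₀ ≤ L → ∀ η : ℝ, ∀ F : ℝ → ℝ, Continuous F →
        (∀ x : ℝ, |F x| ≤ M) → ∀ γ : ℝ → ℝ, Differentiable ℝ γ →
        (∀ t ∈ Set.Icc (0:ℝ) 1,
          deriv γ t = F (γ t) - L * Real.sin (2 * Real.pi * (γ t - η))) →
        η - 1/2 + δ ≤ γ 0 → γ 0 ≤ η + 1/2 - δ →
        |γ 1 - η| ≤ ε := by
  intro ε hε δ hδ M hM
  obtain ⟨hε0, hε2⟩ := hε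
  obtain ⟨hδ0, hδ2⟩ := hδ
  have hπ : 0 < Real.pi := Real.pi_pos
  set ε' : ℝ := min ε ((1/2 - δ)/2) with hε'def
  have hε'0 : 0 < ε' := lt_min hε0 (by linarith)
  have hε'b : ε' < 1/2 - δ := (min_le_right _ _).trans_lt (by linarith)
  have hε'ε : ε' ≤ ε := min_le_left _ _
  set m : ℝ := min ε' (δ/2) with hmdef
  have hm0 : 0 < m := lt_min hε'0 (by linarith)
  have hm14 : m < 1/4 := (min_le_right _ _).trans_lt (by linarith)
  set s : ℝ := Real.sin (2 * Real.pi * m) with hsdef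
  have hs : 0 < s := Real.sin_pos_of_pos_of_lt_pi (by positivity) (by nlinarith)
  refine ⟨(M + 1)/s, by positivity, ?_⟩
  intro L hL η F hF hFM γ hγ hode h0l h0u
  have hL0 : 0 < L := lt_of_lt_of_le (by positivity) hL
  have hLs : M + 1 ≤ L * s := by
    rw [div_le_iff₀ hs] at hL; linarith
  -- sine lower bound on the band
  have hsin : ∀ x ∈ Set.Icc ε' (1/2 - δ/2), s ≤ Real.sin (2 * Real.pi * x) := by
    intro x hx
    apply squeeze_sin_lower
    · positivity
    · nlinarith [min_le_right ε' (δ/2)]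
    · nlinarith [min_le_left ε' (δ/2), hx.1]
    · have : m ≤ δ/2 := min_le_right _ _
      nlinarith [hx.2]
  -- upper squeeze for g = γ - η
  have hg1 : γ 1 - η ≤ ε' := by
    apply squeeze_upper (fun t => γ t - η) (hγ.sub_const η) ε' (1/2 - δ) (1/2 - δ/2)
      hε'0 hε'b (by linarith) (by linarith)
    · intro t ht hband
      have hd : deriv (fun t => γ t - η) t = deriv γ t := by
        simp [deriv_sub_const]
      rw [hd, hode t ht]
      have hFb := abs_le.mp (hFM (γ t))
      have hsb := hsin _ hband
      nlinarith [hsb, hFb.2]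
    · linarith
  -- lower squeeze for g₂ = η - γ
  have hg2 : η - γ 1 ≤ ε' := by
    apply squeeze_upper (fun t => η - γ t) ((differentiable_const η).sub hγ) ε'
      (1/2 - δ) (1/2 - δ/2) hε'0 hε'b (by linarith) (by linarith)
    · intro t ht hband
      have hd : deriv (fun t => η - γ t) t = -deriv γ t := by
        simp [deriv_const_sub]
      have hsineq : Real.sin (2 * Real.pi * (γ t - η)) =
          -Real.sin (2 * Real.pi * (η - γ t)) := by
        rw [← Real.sin_neg]; ring_nf
      rw [hd, hode t ht, hsineq]
      have hFb := abs_le.mp (hFM (γ t))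
      have hsb := hsin _ hband
      nlinarith [hsb, hFb.1]
    · linarith
  have : |γ 1 - η| ≤ ε' := abs_le.mpr ⟨by linarith, hg1⟩
  linarith
end

section
/- Define k : ℝ → ℝ by k(t) = 1 for t ∈ [0,1) ∪ [2,3) ∪ [4,5] and k(t) = −1 for t ∈ [1,2) ∪ [3,4), and define η : ℝ → ℝ by η(t) = 0 for t ∈ [0,2), η(t) = 1/3 for t ∈ [2,4), and η(t) = −1/3 for t ∈ [4,5]. Then for every ε > 0 there exists L₀ > 0 such that for all L ≥ L₀ the following holds: whenever γ₁, γ₂, γ₃ : [0,5] → ℝ are continuous, differentiable on each open interval (n, n+1) for n ∈ {0,1,2,3,4} with γ_j′(t) = −k(t)·L·sin(2π(γ_j(t) − η(t))) there, and γ₁(0) = 0, γ₂(0) = 1/3, γ₃(0) = −1/3, then: −ε ≤ γ₃(1) < γ₂(1) ≤ ε, and 1/3 − ε ≤ γ₁(3) < γ₃(3) + 1 ≤ 1/3 + ε, and −1/3 − ε ≤ γ₂(5) − 1 < γ₁(5) ≤ −1/3 + ε. -/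
open Real Set Filter Topology


/-- The control sign `k(t)`: equal to `1` on `[0,1) ∪ [2,3) ∪ [4,5]` and `−1` on
`[1,2) ∪ [3,4)`. -/
noncomputable def controlSign (t : ℝ) : ℝ :=
  if t < 1 then 1 else if t < 2 then -1 else if t < 3 then 1 else if t < 4 then -1 else 1

/-- The target point `η(t)`: equal to `0` on `[0,2)`, `1/3` on `[2,4)`, `−1/3` on `[4,5]`. -/
noncomputable def controlTarget (t : ℝ) : ℝ :=
  if t < 2 then 0 else if t < 4 then 1/3 else -1/3

/-- Uniqueness at the right endpoint for solutions of a Lipschitz ODE whose derivative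
is only known on the open interval. -/
lemma uniq_endpoint {v : ℝ → ℝ → ℝ} {K : NNReal} (hv : ∀ t, LipschitzWith K (v t))
    {f g : ℝ → ℝ} {a b : ℝ} (hab : a < b)
    (hf : ContinuousOn f (Set.Icc a b)) (hg : ContinuousOn g (Set.Icc a b))
    (hf' : ∀ t ∈ Set.Ioo a b, HasDerivAt f (v t (f t)) t)
    (hg' : ∀ t ∈ Set.Ioo a b, HasDerivAt g (v t (g t)) t)
    (ha : f a = g a) : f b = g b := by
  have key : ∀ s ∈ Set.Ioo a b,
      dist (f b) (g b) ≤ dist (f s) (g s) * Real.exp (K * (b - a)) := by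
    intro s hs
    have h1 : dist (f b) (g b) ≤ dist (f s) (g s) * Real.exp (K * (b - s)) := by
      refine dist_le_of_trajectories_ODE hv
        (hf.mono (Set.Icc_subset_Icc_left hs.1.le))
        (fun t ht => (hf' t ⟨lt_of_lt_of_le hs.1 ht.1, ht.2⟩).hasDerivWithinAt)
        (hg.mono (Set.Icc_subset_Icc_left hs.1.le))
        (fun t ht => (hg' t ⟨lt_of_lt_of_le hs.1 ht.1, ht.2⟩).hasDerivWithinAt)
        le_rfl b (Set.right_mem_Icc.2 hs.2.le)
    refine h1.trans (mul_le_mul_of_nonneg_left (Real.exp_le_exp.2 ?_) dist_nonneg)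
    have hK : (0:ℝ) ≤ K := K.coe_nonneg
    nlinarith [hs.1]
  have hne : (𝓝[Set.Ioo a b] a).NeBot := left_nhdsWithin_Ioo_neBot hab
  have hmemIcc : a ∈ Set.Icc a b := Set.left_mem_Icc.2 hab.le
  have hta : Filter.Tendsto (fun s => dist (f s) (g s) * Real.exp (K * (b - a)))
      (𝓝[Set.Ioo a b] a) (𝓝 0) := by
    have h0 : dist (f a) (g a) * Real.exp (K * (b - a)) = 0 := by
      rw [ha, dist_self, zero_mul]
    rw [← h0]
    refine Filter.Tendsto.mul (Filter.Tendsto.dist ?_ ?_) tendsto_const_nhds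
    · exact ((hf.continuousWithinAt hmemIcc).mono_left
        (nhdsWithin_mono a Set.Ioo_subset_Icc_self))
    · exact ((hg.continuousWithinAt hmemIcc).mono_left
        (nhdsWithin_mono a Set.Ioo_subset_Icc_self))
  have hle : dist (f b) (g b) ≤ 0 :=
    ge_of_tendsto hta (Filter.eventually_of_mem self_mem_nhdsWithin key)
  exact dist_le_zero.1 hle

lemma abs_sin_sub_le (A B : ℝ) : |Real.sin A - Real.sin B| ≤ |A - B| := by
  rw [Real.sin_sub_sin, abs_mul, abs_mul, abs_two]
  have h1 : |Real.sin ((A - B) / 2)| ≤ |(A - B) / 2| := Real.abs_sin_le_abs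
  have h2 : |Real.cos ((A + B) / 2)| ≤ 1 := Real.abs_cos_le_one _
  have h3 : |(A - B) / 2| = |A - B| / 2 := by rw [abs_div]; norm_num
  nlinarith [mul_le_mul h1 h2 (abs_nonneg _) (abs_nonneg _), abs_nonneg (A - B)]

lemma lipF {σ L : ℝ} (c : ℝ) (hσ : σ = 1 ∨ σ = -1) (hL : 0 ≤ L) :
    LipschitzWith (⟨2 * Real.pi * L, by positivity⟩ : NNReal)
      (fun y => -σ * L * Real.sin (2 * Real.pi * (y - c))) := by
  apply LipschitzWith.of_dist_le_mul
  intro y z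
  simp only [Real.dist_eq, NNReal.coe_mk]
  have habs : |(-σ * L * Real.sin (2*Real.pi*(y-c))) - (-σ * L * Real.sin (2*Real.pi*(z-c)))|
      = |σ| * L * |Real.sin (2*Real.pi*(y-c)) - Real.sin (2*Real.pi*(z-c))| := by
    rw [show (-σ * L * Real.sin (2*Real.pi*(y-c))) - (-σ * L * Real.sin (2*Real.pi*(z-c)))
        = (-(σ * L)) * (Real.sin (2*Real.pi*(y-c)) - Real.sin (2*Real.pi*(z-c))) by ring,
      abs_mul, abs_neg, abs_mul, abs_of_nonneg hL]
  rw [habs]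
  have hs1 : |σ| = 1 := by rcases hσ with h | h <;> simp [h]
  rw [hs1, one_mul]
  have h1 := abs_sin_sub_le (2*Real.pi*(y-c)) (2*Real.pi*(z-c))
  have h2 : |2*Real.pi*(y-c) - 2*Real.pi*(z-c)| = 2*Real.pi*|y-z| := by
    rw [show 2*Real.pi*(y-c) - 2*Real.pi*(z-c) = 2*Real.pi*(y-z) by ring, abs_mul,
      abs_of_nonneg (by positivity : (0:ℝ) ≤ 2*Real.pi)]
  show _ ≤ 2 * Real.pi * L * |y - z|
  nlinarith [abs_nonneg (Real.sin (2*Real.pi*(y-c)) - Real.sin (2*Real.pi*(z-c)))]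

lemma sol_hasDerivAt (σ L c K a : ℝ) (t : ℝ) :
    HasDerivAt (fun s => c + Real.arctan (K * Real.exp (-σ*(2*Real.pi*L)*(s-a))) / Real.pi)
      (-σ * L * Real.sin (2 * Real.pi *
        ((c + Real.arctan (K * Real.exp (-σ*(2*Real.pi*L)*(t-a))) / Real.pi) - c))) t := by
  have hπ : Real.pi ≠ 0 := Real.pi_ne_zero
  have h1 : HasDerivAt (fun s : ℝ => -σ*(2*Real.pi*L)*(s-a)) (-σ*(2*Real.pi*L)) t := by
    simpa using ((hasDerivAt_id t).sub_const a).const_mul (-σ*(2*Real.pi*L))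
  have h2 : HasDerivAt (fun s : ℝ => Real.exp (-σ*(2*Real.pi*L)*(s-a)))
      (Real.exp (-σ*(2*Real.pi*L)*(t-a)) * (-σ*(2*Real.pi*L))) t := HasDerivAt.exp h1
  have h3 := h2.const_mul K
  have h4 := (Real.hasDerivAt_arctan (K * Real.exp (-σ*(2*Real.pi*L)*(t-a)))).comp t h3
  have h5 := (h4.div_const Real.pi).const_add c
  convert h5 using 1
  · rfl
  · rfl
  · rfl
  set w : ℝ := K * Real.exp (-σ*(2*Real.pi*L)*(t-a)) with hw
  have hpos : (0:ℝ) < 1 + w^2 := by positivity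
  have hs : Real.sqrt (1 + w^2) * Real.sqrt (1 + w^2) = 1 + w^2 := Real.mul_self_sqrt hpos.le
  have harg : 2 * Real.pi * ((c + Real.arctan w / Real.pi) - c) = 2 * Real.arctan w := by
    field_simp; ring
  have hsin : Real.sin (2 * Real.pi * ((c + Real.arctan w / Real.pi) - c)) = 2*w/(1+w^2) := by
    rw [harg, Real.sin_two_mul, Real.sin_arctan, Real.cos_arctan, mul_assoc,
      div_mul_div_comm, mul_one, hs]
    ring
  rw [hsin]
  rw [show K * (Real.exp (-σ*(2*Real.pi*L)*(t-a)) * (-σ*(2*Real.pi*L)))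
      = w * (-σ*(2*Real.pi*L)) from by rw [hw]; ring]
  field_simp

/-- One squeezing step: on `[a, a+1]`, a trajectory of `γ' = -σ L sin(2π(γ - c))`
starting at `x₀` with `x₀ - c ∈ (-1/2, 1/2)` has the explicit arctan value at `a+1`. -/
lemma step {L σ c a b x₀ : ℝ} (hL : 0 < L) (hσ : σ = 1 ∨ σ = -1) (hb : b = a + 1)
    {γ : ℝ → ℝ} (hcont : ContinuousOn γ (Set.Icc a b))
    (hder : ∀ t ∈ Set.Ioo a b,
      HasDerivAt γ (-σ * L * Real.sin (2*Real.pi*(γ t - c))) t)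
    (hinit : γ a = x₀) (hmem : x₀ - c ∈ Set.Ioo (-(1/2) : ℝ) (1/2)) :
    γ b = c + Real.arctan (Real.tan (Real.pi*(x₀-c)) * Real.exp (-σ*(2*Real.pi*L))) /
      Real.pi := by
  subst hb
  have hπ : (0:ℝ) < Real.pi := Real.pi_pos
  set K := Real.tan (Real.pi*(x₀-c)) with hK
  set u : ℝ → ℝ := fun s => c + Real.arctan (K * Real.exp (-σ*(2*Real.pi*L)*(s-a))) / Real.pi
    with hu
  have hu' : ∀ t, HasDerivAt u (-σ * L * Real.sin (2*Real.pi*(u t - c))) t := fun t =>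
    sol_hasDerivAt σ L c K a t
  have hua : u a = x₀ := by
    have : Real.arctan (Real.tan (Real.pi*(x₀-c))) = Real.pi*(x₀-c) := by
      apply Real.arctan_tan
      · nlinarith [hmem.1]
      · nlinarith [hmem.2]
    simp only [hu, sub_self, mul_zero, Real.exp_zero, mul_one, ← hK]
    rw [hK, this]
    field_simp
    ring
  have huc : ContinuousOn u (Set.Icc a (a+1)) :=
    Continuous.continuousOn (by
      apply continuous_const.add
      exact ((Real.continuous_arctan.comp
        (continuous_const.mul (Real.continuous_exp.comp
          (continuous_const.mul (continuous_id.sub continuous_const))))).div_const _))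
  have hfin : γ (a+1) = u (a+1) := by
    apply uniq_endpoint (v := fun _ y => -σ * L * Real.sin (2*Real.pi*(y - c)))
      (fun _ => lipF c hσ hL.le) (by linarith : a < a + 1) hcont huc hder
      (fun t _ => hu' t) (by rw [hinit, hua])
  rw [hfin]
  simp only [hu, add_sub_cancel_left, mul_one, hK]

lemma deriv_convert {L σ c η : ℝ} {γ : ℝ → ℝ} {a b : ℝ}
    (hσ : ∀ t ∈ Set.Ioo a b, controlSign t = σ)
    (hη : ∀ t ∈ Set.Ioo a b, controlTarget t = η)
    (hshift : c = η ∨ c = η + 1 ∨ c = η - 1)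
    (h : ∀ t ∈ Set.Ioo a b, HasDerivAt γ
      (-(controlSign t) * L * Real.sin (2*Real.pi*(γ t - controlTarget t))) t) :
    ∀ t ∈ Set.Ioo a b, HasDerivAt γ (-σ * L * Real.sin (2*Real.pi*(γ t - c))) t := by
  intro t ht
  have h2 := h t ht
  rw [hσ t ht, hη t ht] at h2
  have hsin : Real.sin (2*Real.pi*(γ t - c)) = Real.sin (2*Real.pi*(γ t - η)) := by
    rcases hshift with hc | hc | hc
    · rw [hc]
    · rw [hc, show 2*Real.pi*(γ t - (η+1)) = 2*Real.pi*(γ t - η) - 2*Real.pi by ring,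
        Real.sin_sub_two_pi]
    · rw [hc, show 2*Real.pi*(γ t - (η-1)) = 2*Real.pi*(γ t - η) + 2*Real.pi by ring,
        Real.sin_add_two_pi]
  rw [hsin]
  exact h2

lemma arctan_le_self {x : ℝ} (hx : 0 ≤ x) : Real.arctan x ≤ x := by
  rcases lt_or_ge x (Real.pi/2) with h | h
  · calc Real.arctan x ≤ Real.arctan (Real.tan x) :=
        Real.arctan_strictMono.monotone (Real.le_tan hx h)
      _ = x := Real.arctan_tan (by nlinarith [Real.pi_pos]) h
  · exact le_trans (Real.arctan_lt_pi_div_two x).le h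

lemma arctan_sqrt_three : Real.arctan (Real.sqrt 3) = Real.pi / 3 := by
  rw [← Real.tan_pi_div_three]
  exact Real.arctan_tan (by nlinarith [Real.pi_pos]) (by nlinarith [Real.pi_pos])

lemma tan_pi_third : Real.tan (Real.pi * (1/3)) = Real.sqrt 3 := by
  rw [show Real.pi * (1/3) = Real.pi / 3 by ring, Real.tan_pi_div_three]

lemma tan_pi_arctan_div (x : ℝ) :
    Real.tan (Real.pi * (Real.arctan x / Real.pi)) = x := by
  rw [mul_comm, div_mul_cancel₀ _ Real.pi_ne_zero, Real.tan_arctan]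

lemma prod_cancel (L : ℝ) :
    (Real.sqrt 3 * Real.exp (-(2*Real.pi*L))) * Real.exp (-(-1:ℝ)*(2*Real.pi*L))
      = Real.sqrt 3 := by
  rw [mul_assoc, ← Real.exp_add, show -(2*Real.pi*L) + -(-1:ℝ)*(2*Real.pi*L) = 0 by ring,
    Real.exp_zero, mul_one]


set_option maxHeartbeats 2000000 in
/-- Lemma 4.6 (triple squeezing cycle) with the explicit piecewise control: for `L`
large enough, trajectories of `γ' = −k(t) L sin(2π(γ − η(t)))` started at `0`, `1/3`,
`−1/3` are consecutively squeezed near `0` at time 1, near `1/3` at time 3, and near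
`−1/3` at time 5, with orderings preserved. -/
theorem triple_squeezing_cycle :
    ∀ ε : ℝ, 0 < ε → ∃ L₀ : ℝ, 0 < L₀ ∧ ∀ L : ℝ, L₀ ≤ L →
      ∀ γ₁ γ₂ γ₃ : ℝ → ℝ,
      ContinuousOn γ₁ (Set.Icc 0 5) → ContinuousOn γ₂ (Set.Icc 0 5) →
      ContinuousOn γ₃ (Set.Icc 0 5) →
      (∀ n ∈ Finset.range 5, ∀ t ∈ Set.Ioo (n : ℝ) ((n : ℝ) + 1),
        HasDerivAt γ₁ (-(controlSign t) * L *
          Real.sin (2 * Real.pi * (γ₁ t - controlTarget t))) t) →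
      (∀ n ∈ Finset.range 5, ∀ t ∈ Set.Ioo (n : ℝ) ((n : ℝ) + 1),
        HasDerivAt γ₂ (-(controlSign t) * L *
          Real.sin (2 * Real.pi * (γ₂ t - controlTarget t))) t) →
      (∀ n ∈ Finset.range 5, ∀ t ∈ Set.Ioo (n : ℝ) ((n : ℝ) + 1),
        HasDerivAt γ₃ (-(controlSign t) * L *
          Real.sin (2 * Real.pi * (γ₃ t - controlTarget t))) t) →
      γ₁ 0 = 0 → γ₂ 0 = 1/3 → γ₃ 0 = -(1/3) →
      ((-ε ≤ γ₃ 1 ∧ γ₃ 1 < γ₂ 1 ∧ γ₂ 1 ≤ ε) ∧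
       (1/3 - ε ≤ γ₁ 3 ∧ γ₁ 3 < γ₃ 3 + 1 ∧ γ₃ 3 + 1 ≤ 1/3 + ε) ∧
       (-(1/3) - ε ≤ γ₂ 5 - 1 ∧ γ₂ 5 - 1 < γ₁ 5 ∧ γ₁ 5 ≤ -(1/3) + ε)) := by
  intro ε hε
  refine ⟨1/ε + 1, by positivity, ?_⟩
  intro L hLL γ₁ γ₂ γ₃ hc₁ hc₂ hc₃ hd₁ hd₂ hd₃ h10 h20 h30
  have hL : 0 < L := lt_of_lt_of_le (by positivity) hLL
  have hπ : (0:ℝ) < Real.pi := Real.pi_pos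
  -- interval data for the piecewise control
  have hσ1 : ∀ t ∈ Set.Ioo (0:ℝ) 1, controlSign t = 1 := by
    intro t ht; unfold controlSign; rw [if_pos ht.2]
  have hη1 : ∀ t ∈ Set.Ioo (0:ℝ) 1, controlTarget t = 0 := by
    intro t ht; unfold controlTarget; rw [if_pos (by linarith [ht.2] : t < 2)]
  have hσ2 : ∀ t ∈ Set.Ioo (1:ℝ) 2, controlSign t = -1 := by
    intro t ht; unfold controlSign
    rw [if_neg (by linarith [ht.1] : ¬ t < 1), if_pos ht.2]
  have hη2 : ∀ t ∈ Set.Ioo (1:ℝ) 2, controlTarget t = 0 := by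
    intro t ht; unfold controlTarget; rw [if_pos ht.2]
  have hσ3 : ∀ t ∈ Set.Ioo (2:ℝ) 3, controlSign t = 1 := by
    intro t ht; unfold controlSign
    rw [if_neg (by linarith [ht.1] : ¬ t < 1), if_neg (by linarith [ht.1] : ¬ t < 2),
      if_pos ht.2]
  have hη3 : ∀ t ∈ Set.Ioo (2:ℝ) 3, controlTarget t = 1/3 := by
    intro t ht; unfold controlTarget
    rw [if_neg (by linarith [ht.1] : ¬ t < 2), if_pos (by linarith [ht.2] : t < 4)]
  have hσ4 : ∀ t ∈ Set.Ioo (3:ℝ) 4, controlSign t = -1 := by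
    intro t ht; unfold controlSign
    rw [if_neg (by linarith [ht.1] : ¬ t < 1), if_neg (by linarith [ht.1] : ¬ t < 2),
      if_neg (by linarith [ht.1] : ¬ t < 3), if_pos ht.2]
  have hη4 : ∀ t ∈ Set.Ioo (3:ℝ) 4, controlTarget t = 1/3 := by
    intro t ht; unfold controlTarget
    rw [if_neg (by linarith [ht.1] : ¬ t < 2), if_pos ht.2]
  have hσ5 : ∀ t ∈ Set.Ioo (4:ℝ) 5, controlSign t = 1 := by
    intro t ht; unfold controlSign
    rw [if_neg (by linarith [ht.1] : ¬ t < 1), if_neg (by linarith [ht.1] : ¬ t < 2),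
      if_neg (by linarith [ht.1] : ¬ t < 3), if_neg (by linarith [ht.1] : ¬ t < 4)]
  have hη5 : ∀ t ∈ Set.Ioo (4:ℝ) 5, controlTarget t = -(1/3) := by
    intro t ht; unfold controlTarget
    rw [if_neg (by linarith [ht.1] : ¬ t < 2), if_neg (by linarith [ht.1] : ¬ t < 4)]
    norm_num
  -- the basic contraction quantity
  set E := Real.exp (-(2*Real.pi*L)) with hE
  set A := Real.arctan (Real.sqrt 3 * E) / Real.pi with hA
  have hE0 : 0 < E := Real.exp_pos _
  have h3pos : (0:ℝ) < Real.sqrt 3 := by positivity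
  have hA0 : 0 < A := by
    rw [hA]
    apply div_pos _ hπ
    rw [← Real.arctan_zero]
    exact Real.arctan_strictMono (by positivity)
  have hA2 : A < 1/2 := by
    rw [hA, div_lt_iff₀ hπ]
    linarith [Real.arctan_lt_pi_div_two (Real.sqrt 3 * E)]
  have hAε : A ≤ ε := by
    have hs3 : Real.sqrt 3 ≤ Real.pi := by
      nlinarith [Real.sq_sqrt (by norm_num : (0:ℝ) ≤ 3), Real.two_le_pi, Real.sqrt_nonneg 3]
    have hEL : E ≤ 1/L := by
      rw [hE, Real.exp_neg, one_div]
      apply inv_anti₀ hL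
      nlinarith [Real.add_one_le_exp (2*Real.pi*L), Real.two_le_pi]
    have h1L : 1/L ≤ ε := by
      rw [div_le_iff₀ hL]
      have h := mul_le_mul_of_nonneg_right hLL hε.le
      have h2 : (1/ε + 1) * ε = 1 + ε := by field_simp
      nlinarith
    have harc : Real.arctan (Real.sqrt 3 * E) ≤ Real.sqrt 3 * E :=
      arctan_le_self (by positivity)
    calc A = Real.arctan (Real.sqrt 3 * E) / Real.pi := hA
      _ ≤ (Real.sqrt 3 * E) / Real.pi := by gcongr
      _ ≤ (Real.pi * E) / Real.pi := by gcongr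
      _ = E := by field_simp
      _ ≤ 1/L := hEL
      _ ≤ ε := h1L
  -- squeezing on [0,1]
  have e11 : γ₁ 1 = 0 := by
    have h := step (c := (0:ℝ)) (a := (0:ℝ)) (b := (1:ℝ)) hL (Or.inl rfl) (by norm_num)
      (hc₁.mono (Set.Icc_subset_Icc (by norm_num) (by norm_num)))
      (deriv_convert hσ1 hη1 (Or.inl rfl)
        (fun t ht => hd₁ 0 (by norm_num) t
          ⟨by push_cast; linarith [ht.1], by push_cast; linarith [ht.2]⟩))
      h10 (by rw [Set.mem_Ioo]; norm_num)
    simpa using h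
  have e21 : γ₂ 1 = A := by
    have h := step (c := (0:ℝ)) (a := (0:ℝ)) (b := (1:ℝ)) hL (Or.inl rfl) (by norm_num)
      (hc₂.mono (Set.Icc_subset_Icc (by norm_num) (by norm_num)))
      (deriv_convert hσ1 hη1 (Or.inl rfl)
        (fun t ht => hd₂ 0 (by norm_num) t
          ⟨by push_cast; linarith [ht.1], by push_cast; linarith [ht.2]⟩))
      h20 (by rw [Set.mem_Ioo]; norm_num)
    rw [h, hA, hE, sub_zero, tan_pi_third,
      show -(1:ℝ)*(2*Real.pi*L) = -(2*Real.pi*L) by norm_num, zero_add]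
  have e31 : γ₃ 1 = -A := by
    have h := step (c := (0:ℝ)) (a := (0:ℝ)) (b := (1:ℝ)) hL (Or.inl rfl) (by norm_num)
      (hc₃.mono (Set.Icc_subset_Icc (by norm_num) (by norm_num)))
      (deriv_convert hσ1 hη1 (Or.inl rfl)
        (fun t ht => hd₃ 0 (by norm_num) t
          ⟨by push_cast; linarith [ht.1], by push_cast; linarith [ht.2]⟩))
      h30 (by rw [Set.mem_Ioo]; norm_num)
    rw [h, show (-(1/3) - (0:ℝ)) = -(1/3) by ring,
      show Real.pi * -(1/3 : ℝ) = -(Real.pi * (1/3)) by ring, Real.tan_neg, tan_pi_third,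
      show -(1:ℝ)*(2*Real.pi*L) = -(2*Real.pi*L) by norm_num, neg_mul, Real.arctan_neg,
      zero_add, neg_div, hA, hE]
  -- squeezing on [1,2]
  have e12 : γ₁ 2 = 0 := by
    have h := step (c := (0:ℝ)) (a := (1:ℝ)) (b := (2:ℝ)) hL (Or.inr rfl) (by norm_num)
      (hc₁.mono (Set.Icc_subset_Icc (by norm_num) (by norm_num)))
      (deriv_convert hσ2 hη2 (Or.inl rfl)
        (fun t ht => hd₁ 1 (by norm_num) t
          ⟨by push_cast; linarith [ht.1], by push_cast; linarith [ht.2]⟩))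
      e11 (by rw [Set.mem_Ioo]; norm_num)
    simpa using h
  have e22 : γ₂ 2 = 1/3 := by
    have h := step (c := (0:ℝ)) (a := (1:ℝ)) (b := (2:ℝ)) hL (Or.inr rfl) (by norm_num)
      (hc₂.mono (Set.Icc_subset_Icc (by norm_num) (by norm_num)))
      (deriv_convert hσ2 hη2 (Or.inl rfl)
        (fun t ht => hd₂ 1 (by norm_num) t
          ⟨by push_cast; linarith [ht.1], by push_cast; linarith [ht.2]⟩))
      e21 (by rw [Set.mem_Ioo]; constructor <;> linarith)
    rw [h, sub_zero, hA, hE, tan_pi_arctan_div, prod_cancel, _root_.arctan_sqrt_three, zero_add]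
    field_simp
  have e32 : γ₃ 2 = -(1/3) := by
    have h := step (c := (0:ℝ)) (a := (1:ℝ)) (b := (2:ℝ)) hL (Or.inr rfl) (by norm_num)
      (hc₃.mono (Set.Icc_subset_Icc (by norm_num) (by norm_num)))
      (deriv_convert hσ2 hη2 (Or.inl rfl)
        (fun t ht => hd₃ 1 (by norm_num) t
          ⟨by push_cast; linarith [ht.1], by push_cast; linarith [ht.2]⟩))
      e31 (by rw [Set.mem_Ioo]; constructor <;> linarith)
    rw [h, sub_zero, hA, hE,
      show Real.pi * -(Real.arctan (Real.sqrt 3 * Real.exp (-(2*Real.pi*L))) / Real.pi)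
        = -(Real.pi * (Real.arctan (Real.sqrt 3 * Real.exp (-(2*Real.pi*L))) / Real.pi))
        by ring,
      Real.tan_neg, tan_pi_arctan_div, neg_mul, prod_cancel, Real.arctan_neg,
      _root_.arctan_sqrt_three, zero_add, neg_div]
    field_simp
  -- squeezing on [2,3]
  have e13 : γ₁ 3 = 1/3 - A := by
    have h := step (c := (1/3:ℝ)) (a := (2:ℝ)) (b := (3:ℝ)) hL (Or.inl rfl) (by norm_num)
      (hc₁.mono (Set.Icc_subset_Icc (by norm_num) (by norm_num)))
      (deriv_convert hσ3 hη3 (Or.inl rfl)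
        (fun t ht => hd₁ 2 (by norm_num) t
          ⟨by push_cast; linarith [ht.1], by push_cast; linarith [ht.2]⟩))
      e12 (by rw [Set.mem_Ioo]; norm_num)
    rw [h, show ((0:ℝ) - 1/3) = -(1/3) by norm_num,
      show Real.pi * -(1/3 : ℝ) = -(Real.pi * (1/3)) by ring, Real.tan_neg, tan_pi_third,
      show -(1:ℝ)*(2*Real.pi*L) = -(2*Real.pi*L) by norm_num, neg_mul, Real.arctan_neg,
      neg_div, hA, hE]
    ring
  have e23 : γ₂ 3 = 1/3 := by
    have h := step (c := (1/3:ℝ)) (a := (2:ℝ)) (b := (3:ℝ)) hL (Or.inl rfl) (by norm_num)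
      (hc₂.mono (Set.Icc_subset_Icc (by norm_num) (by norm_num)))
      (deriv_convert hσ3 hη3 (Or.inl rfl)
        (fun t ht => hd₂ 2 (by norm_num) t
          ⟨by push_cast; linarith [ht.1], by push_cast; linarith [ht.2]⟩))
      e22 (by rw [Set.mem_Ioo]; norm_num)
    simpa using h
  have e33 : γ₃ 3 = -(2/3) + A := by
    have h := step (c := (-(2/3):ℝ)) (a := (2:ℝ)) (b := (3:ℝ)) hL (Or.inl rfl) (by norm_num)
      (hc₃.mono (Set.Icc_subset_Icc (by norm_num) (by norm_num)))
      (deriv_convert hσ3 hη3 (Or.inr (Or.inr (by norm_num)))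
        (fun t ht => hd₃ 2 (by norm_num) t
          ⟨by push_cast; linarith [ht.1], by push_cast; linarith [ht.2]⟩))
      e32 (by rw [Set.mem_Ioo]; norm_num)
    rw [h, show (-(1/3) - -(2/3) : ℝ) = 1/3 by norm_num, tan_pi_third,
      show -(1:ℝ)*(2*Real.pi*L) = -(2*Real.pi*L) by norm_num, hA, hE]
  -- squeezing on [3,4]
  have e14 : γ₁ 4 = 0 := by
    have h := step (c := (1/3:ℝ)) (a := (3:ℝ)) (b := (4:ℝ)) hL (Or.inr rfl) (by norm_num)
      (hc₁.mono (Set.Icc_subset_Icc (by norm_num) (by norm_num)))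
      (deriv_convert hσ4 hη4 (Or.inl rfl)
        (fun t ht => hd₁ 3 (by norm_num) t
          ⟨by push_cast; linarith [ht.1], by push_cast; linarith [ht.2]⟩))
      e13 (by rw [Set.mem_Ioo]; constructor <;> linarith)
    rw [h, show ((1/3 - A) - 1/3 : ℝ) = -A by ring, hA, hE,
      show Real.pi * -(Real.arctan (Real.sqrt 3 * Real.exp (-(2*Real.pi*L))) / Real.pi)
        = -(Real.pi * (Real.arctan (Real.sqrt 3 * Real.exp (-(2*Real.pi*L))) / Real.pi))
        by ring,
      Real.tan_neg, tan_pi_arctan_div, neg_mul, prod_cancel, Real.arctan_neg,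
      _root_.arctan_sqrt_three]
    field_simp
    norm_num
  have e24 : γ₂ 4 = 1/3 := by
    have h := step (c := (1/3:ℝ)) (a := (3:ℝ)) (b := (4:ℝ)) hL (Or.inr rfl) (by norm_num)
      (hc₂.mono (Set.Icc_subset_Icc (by norm_num) (by norm_num)))
      (deriv_convert hσ4 hη4 (Or.inl rfl)
        (fun t ht => hd₂ 3 (by norm_num) t
          ⟨by push_cast; linarith [ht.1], by push_cast; linarith [ht.2]⟩))
      e23 (by rw [Set.mem_Ioo]; norm_num)
    simpa using h
  -- squeezing on [4,5]
  have e15 : γ₁ 5 = -(1/3) + A := by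
    have h := step (c := (-(1/3):ℝ)) (a := (4:ℝ)) (b := (5:ℝ)) hL (Or.inl rfl) (by norm_num)
      (hc₁.mono (Set.Icc_subset_Icc (by norm_num) (by norm_num)))
      (deriv_convert hσ5 hη5 (Or.inl rfl)
        (fun t ht => hd₁ 4 (by norm_num) t
          ⟨by push_cast; linarith [ht.1], by push_cast; linarith [ht.2]⟩))
      e14 (by rw [Set.mem_Ioo]; norm_num)
    rw [h, show ((0:ℝ) - -(1/3)) = 1/3 by norm_num, tan_pi_third,
      show -(1:ℝ)*(2*Real.pi*L) = -(2*Real.pi*L) by norm_num, hA, hE]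
  have e25 : γ₂ 5 = 2/3 - A := by
    have h := step (c := (2/3:ℝ)) (a := (4:ℝ)) (b := (5:ℝ)) hL (Or.inl rfl) (by norm_num)
      (hc₂.mono (Set.Icc_subset_Icc (by norm_num) (by norm_num)))
      (deriv_convert hσ5 hη5 (Or.inr (Or.inl (by norm_num)))
        (fun t ht => hd₂ 4 (by norm_num) t
          ⟨by push_cast; linarith [ht.1], by push_cast; linarith [ht.2]⟩))
      e24 (by rw [Set.mem_Ioo]; norm_num)
    rw [h, show ((1/3 : ℝ) - 2/3) = -(1/3) by norm_num,
      show Real.pi * -(1/3 : ℝ) = -(Real.pi * (1/3)) by ring, Real.tan_neg, tan_pi_third,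
      show -(1:ℝ)*(2*Real.pi*L) = -(2*Real.pi*L) by norm_num, neg_mul, Real.arctan_neg,
      neg_div, hA, hE]
    ring
  refine ⟨⟨by rw [e31]; linarith, by rw [e31, e21]; linarith, by rw [e21]; linarith⟩,
    ⟨by rw [e13]; linarith, by rw [e13, e33]; linarith, by rw [e33]; linarith⟩,
    ⟨by rw [e25]; linarith, by rw [e25, e15]; linarith, by rw [e15]; linarith⟩⟩
end
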